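/- Among all unit-norm frames {f_i}_{i=1}^k of ℝ^n, the 2-frame potential FP₂(F) = ∑_{i<j} |⟨f_i,f_j⟩|² is minimized exactly when F is a tight frame, i.e., when F Fᵀ = (k/n) I_n. -/

import Mathlib

open scoped RealInnerProductSpace

/-- The 2-frame potential `FP₂(f) = ∑_{i<j} |⟨f i, f j⟩|²`. -/
noncomputable def framePotential2 {n k : ℕ}
    (f : Fin k → EuclideanSpace ℝ (Fin n)) : ℝ :=
  ∑ q ∈ Finset.filter (fun q : Fin k × Fin k => q.1 < q.2) Finset.univ,
    |⟪f q.1, f q.2⟫| ^ 2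

open Finset Complex

lemma expsum {k : ℕ} (hk : 0 < k) (t : ℤ) :
    ∑ j : Fin k, Complex.exp ((2 * Real.pi * j * t / k) * Complex.I)
      = if (k:ℤ) ∣ t then (k:ℂ) else 0 := by
  have hkc : (k:ℂ) ≠ 0 := Nat.cast_ne_zero.2 hk.ne'
  set z : ℂ := Complex.exp ((2 * Real.pi * t / k) * Complex.I) with hz
  have hpow : ∀ j : ℕ, Complex.exp ((2 * Real.pi * j * t / k) * Complex.I) = z ^ j := by
    intro j
    rw [hz, ← Complex.exp_nat_mul]
    ring_nf
  have hsum : ∑ j : Fin k, Complex.exp ((2 * Real.pi * j * t / k) * Complex.I)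
      = ∑ j ∈ Finset.range k, z ^ j := by
    rw [Finset.sum_range fun j => z ^ j]
    exact Finset.sum_congr rfl fun j _ => hpow j
  rw [hsum]
  have hIpi : (2 * Real.pi * Complex.I : ℂ) ≠ 0 := by
    simp [Real.pi_ne_zero, Complex.I_ne_zero]
  by_cases hd : (k:ℤ) ∣ t
  · obtain ⟨m, hm⟩ := hd
    have hz1 : z = 1 := by
      rw [hz]
      have heq : ((2 * Real.pi * t / k) * Complex.I : ℂ) = (m : ℤ) * (2 * Real.pi * Complex.I) := by
        have ht : (t:ℂ) = (k:ℂ) * m := by exact_mod_cast hm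
        field_simp [ht]
        linear_combination ht
      rw [heq, Complex.exp_int_mul_two_pi_mul_I]
    rw [if_pos ⟨m, hm⟩]
    simp [hz1]
  · have hz1 : z ≠ 1 := by
      intro h
      rw [hz, Complex.exp_eq_one_iff] at h
      obtain ⟨m, hm⟩ := h
      apply hd
      refine ⟨m, ?_⟩
      have h2 : ((t:ℂ)/k) * (2 * Real.pi * Complex.I) = (m:ℂ) * (2 * Real.pi * Complex.I) := by
        rw [← hm]; ring
      have h3 : (t:ℂ)/k = m := mul_right_cancel₀ hIpi h2
      have h4 : (t:ℂ) = (k:ℂ) * m := by field_simp at h3; rw [h3]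
      exact_mod_cast h4
    rw [geom_sum_eq hz1, if_neg hd]
    have hzk : z ^ k = 1 := by
      rw [hz, ← Complex.exp_nat_mul]
      have heq : ((k:ℂ) * ((2 * Real.pi * t / k) * Complex.I)) = (t : ℤ) * (2 * Real.pi * Complex.I) := by
        field_simp
      rw [heq, Complex.exp_int_mul_two_pi_mul_I]
    rw [hzk]
    simp

lemma cossum {k : ℕ} (hk : 0 < k) (t : ℤ) :
    ∑ j : Fin k, Real.cos (2 * Real.pi * j * t / k)
      = if (k:ℤ) ∣ t then (k:ℝ) else 0 := by
  have h := expsum hk t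
  have hre : ∀ j : Fin k, (Complex.exp ((2 * Real.pi * j * t / k) * Complex.I)).re
      = Real.cos (2 * Real.pi * j * t / k) := by
    intro j
    have : ((2 * Real.pi * (j:ℕ) * t / k : ℂ)) = ((2 * Real.pi * (j:ℕ) * t / k : ℝ) : ℂ) := by
      push_cast; ring
    rw [this, Complex.exp_ofReal_mul_I_re]
  have := congrArg Complex.re h
  rw [Complex.re_sum] at this
  simp only [hre] at this
  rw [this]
  split <;> simp

lemma sinsum {k : ℕ} (hk : 0 < k) (t : ℤ) :
    ∑ j : Fin k, Real.sin (2 * Real.pi * j * t / k) = 0 := by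
  have h := expsum hk t
  have him : ∀ j : Fin k, (Complex.exp ((2 * Real.pi * j * t / k) * Complex.I)).im
      = Real.sin (2 * Real.pi * j * t / k) := by
    intro j
    have : ((2 * Real.pi * (j:ℕ) * t / k : ℂ)) = ((2 * Real.pi * (j:ℕ) * t / k : ℝ) : ℂ) := by
      push_cast; ring
    rw [this, Complex.exp_ofReal_mul_I_im]
  have := congrArg Complex.im h
  rw [Complex.im_sum] at this
  simp only [him] at this
  rw [this]
  split <;> simp


lemma notdvd {k : ℕ} (t : ℤ) (h0 : t ≠ 0) (h1 : t.natAbs < (k:ℤ)) : ¬ (k:ℤ) ∣ t := by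
  intro h
  have h2 : (k:ℤ) ∣ |t| := (dvd_abs _ _).2 h
  have h3 : (k:ℤ) ≤ |t| := Int.le_of_dvd (abs_pos.2 h0) h2
  rw [Int.abs_eq_natAbs] at h3
  omega

lemma mulcoscos {k : ℕ} (hk : 0 < k) (t t' : ℤ) :
    ∑ j : Fin k, Real.cos (2*Real.pi*j*t/k) * Real.cos (2*Real.pi*j*t'/k)
      = ((if (k:ℤ) ∣ (t-t') then (k:ℝ) else 0) + (if (k:ℤ) ∣ (t+t') then (k:ℝ) else 0))/2 := by
  rw [← cossum hk (t-t'), ← cossum hk (t+t'), ← Finset.sum_add_distrib, Finset.sum_div]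
  refine Finset.sum_congr rfl fun j _ => ?_
  have h1 : (2*Real.pi*j*((t-t' : ℤ):ℝ)/k : ℝ) = 2*Real.pi*j*t/k - 2*Real.pi*j*t'/k := by
    push_cast; ring
  have h2 : (2*Real.pi*j*((t+t' : ℤ):ℝ)/k : ℝ) = 2*Real.pi*j*t/k + 2*Real.pi*j*t'/k := by
    push_cast; ring
  rw [h1, h2, Real.cos_sub, Real.cos_add]
  ring

lemma mulsinsin {k : ℕ} (hk : 0 < k) (t t' : ℤ) :
    ∑ j : Fin k, Real.sin (2*Real.pi*j*t/k) * Real.sin (2*Real.pi*j*t'/k)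
      = ((if (k:ℤ) ∣ (t-t') then (k:ℝ) else 0) - (if (k:ℤ) ∣ (t+t') then (k:ℝ) else 0))/2 := by
  rw [← cossum hk (t-t'), ← cossum hk (t+t'), ← Finset.sum_sub_distrib, Finset.sum_div]
  refine Finset.sum_congr rfl fun j _ => ?_
  have h1 : (2*Real.pi*j*((t-t' : ℤ):ℝ)/k : ℝ) = 2*Real.pi*j*t/k - 2*Real.pi*j*t'/k := by
    push_cast; ring
  have h2 : (2*Real.pi*j*((t+t' : ℤ):ℝ)/k : ℝ) = 2*Real.pi*j*t/k + 2*Real.pi*j*t'/k := by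
    push_cast; ring
  rw [h1, h2, Real.cos_sub, Real.cos_add]
  ring

lemma mulcossin {k : ℕ} (hk : 0 < k) (t t' : ℤ) :
    ∑ j : Fin k, Real.cos (2*Real.pi*j*t/k) * Real.sin (2*Real.pi*j*t'/k) = 0 := by
  have h1 := sinsum hk (t'+t)
  have h2 := sinsum hk (t'-t)
  have key : ∑ j : Fin k, Real.cos (2*Real.pi*j*t/k) * Real.sin (2*Real.pi*j*t'/k)
      = (∑ j : Fin k, Real.sin (2*Real.pi*j*((t'+t : ℤ):ℝ)/k)
        + ∑ j : Fin k, Real.sin (2*Real.pi*j*((t'-t : ℤ):ℝ)/k))/2 := by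
    rw [← Finset.sum_add_distrib, Finset.sum_div]
    refine Finset.sum_congr rfl fun j _ => ?_
    have e1 : (2*Real.pi*j*((t'+t : ℤ):ℝ)/k : ℝ) = 2*Real.pi*j*t'/k + 2*Real.pi*j*t/k := by
      push_cast; ring
    have e2 : (2*Real.pi*j*((t'-t : ℤ):ℝ)/k : ℝ) = 2*Real.pi*j*t'/k - 2*Real.pi*j*t/k := by
      push_cast; ring
    rw [e1, e2, Real.sin_add, Real.sin_sub]
    ring
  rw [key, h1, h2]
  ring

noncomputable def ang (k : ℕ) (j : Fin k) (t : ℤ) : ℝ := 2*Real.pi*j*t/k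

lemma cossum' {k : ℕ} (hk : 0 < k) (t : ℤ) :
    ∑ j : Fin k, Real.cos (ang k j t) = if (k:ℤ) ∣ t then (k:ℝ) else 0 := by
  unfold ang; exact cossum hk t

lemma sinsum' {k : ℕ} (hk : 0 < k) (t : ℤ) :
    ∑ j : Fin k, Real.sin (ang k j t) = 0 := by
  unfold ang; exact sinsum hk t

lemma mulcoscos' {k : ℕ} (hk : 0 < k) (t t' : ℤ) :
    ∑ j : Fin k, Real.cos (ang k j t) * Real.cos (ang k j t')
      = ((if (k:ℤ) ∣ (t-t') then (k:ℝ) else 0) + (if (k:ℤ) ∣ (t+t') then (k:ℝ) else 0))/2 := by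
  unfold ang; exact mulcoscos hk t t'

lemma mulsinsin' {k : ℕ} (hk : 0 < k) (t t' : ℤ) :
    ∑ j : Fin k, Real.sin (ang k j t) * Real.sin (ang k j t')
      = ((if (k:ℤ) ∣ (t-t') then (k:ℝ) else 0) - (if (k:ℤ) ∣ (t+t') then (k:ℝ) else 0))/2 := by
  unfold ang; exact mulsinsin hk t t'

lemma mulcossin' {k : ℕ} (hk : 0 < k) (t t' : ℤ) :
    ∑ j : Fin k, Real.cos (ang k j t) * Real.sin (ang k j t') = 0 := by
  unfold ang; exact mulcossin hk t t'

lemma harmonicFrame {k n m r : ℕ} (hn : n = 2*m + r) (hr : r ≤ 1) (hn0 : 0 < n) (hnk : n < k) :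
    ∃ g : Fin k → (Fin r ⊕ Fin m × Bool) → ℝ,
      (∀ j, ∑ x, (g j x)^2 = 1) ∧
      (∀ x y, ∑ j, g j x * g j y = if x = y then (k:ℝ)/n else 0) := by
  have hk : 0 < k := by omega
  have hnne : (n:ℝ) ≠ 0 := Nat.cast_ne_zero.2 hn0.ne'
  have hncast : (n:ℝ) = 2*m + r := by rw [hn]; push_cast; ring
  set u : ℝ := Real.sqrt (1/n) with hudef
  set v : ℝ := Real.sqrt (2/n) with hvdef
  have hu : u^2 = 1/n := Real.sq_sqrt (by positivity)
  have hv : v^2 = 2/n := Real.sq_sqrt (by positivity)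
  -- divisibility facts
  have hd1 : ∀ l l' : Fin m, l ≠ l' → ¬ (k:ℤ) ∣ (((l.val:ℤ)+1) - ((l'.val:ℤ)+1)) := by
    intro l l' hne
    have h1 := l.isLt; have h2 := l'.isLt
    have hne' : l.val ≠ l'.val := fun h => hne (Fin.ext h)
    exact notdvd _ (by omega) (by omega)
  have hd2 : ∀ l l' : Fin m, ¬ (k:ℤ) ∣ (((l.val:ℤ)+1) + ((l'.val:ℤ)+1)) := by
    intro l l'
    have h1 := l.isLt; have h2 := l'.isLt
    exact notdvd _ (by omega) (by omega)
  have hd3 : ∀ l : Fin m, ¬ (k:ℤ) ∣ ((l.val:ℤ)+1) := by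
    intro l
    have h1 := l.isLt
    exact notdvd _ (by omega) (by omega)
  refine ⟨fun j x => match x with
    | Sum.inl _ => u
    | Sum.inr (l, false) => v * Real.cos (ang k j ((l.val:ℤ)+1))
    | Sum.inr (l, true) => v * Real.sin (ang k j ((l.val:ℤ)+1)), ?_, ?_⟩
  · -- unit norms
    intro j
    rw [Fintype.sum_sum_type, Fintype.sum_prod_type]
    simp only [Fintype.sum_bool]
    have hpair : ∀ l : Fin m,
        (v * Real.sin (ang k j ((l.val:ℤ)+1)))^2 + (v * Real.cos (ang k j ((l.val:ℤ)+1)))^2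
          = v^2 := by
      intro l
      have := Real.sin_sq_add_cos_sq (ang k j ((l.val:ℤ)+1))
      nlinarith
    rw [Finset.sum_congr rfl (fun l _ => hpair l)]
    simp only [Finset.sum_const, Finset.card_univ, Fintype.card_fin, nsmul_eq_mul]
    rw [hu, hv]
    field_simp
    linarith [hncast]
  · -- frame operator
    intro x y
    obtain (i | ⟨l, b⟩) := x <;> obtain (i' | ⟨l', b'⟩) := y <;> dsimp only
    · -- inl inl
      have hii : i = i' := Fin.ext (by omega)
      subst hii
      rw [if_pos rfl, Finset.sum_const, Finset.card_univ, Fintype.card_fin, nsmul_eq_mul]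
      have : u * u = 1/n := by nlinarith
      rw [this]; field_simp
    · -- inl inr
      cases b'
      · have e : ∑ j : Fin k, u * (v * Real.cos (ang k j ((l'.val:ℤ)+1)))
            = (u*v) * ∑ j : Fin k, Real.cos (ang k j ((l'.val:ℤ)+1)) := by
          rw [Finset.mul_sum]; exact Finset.sum_congr rfl fun j _ => by ring
        rw [e, cossum' hk, if_neg (hd3 l')]
        simp
      · have e : ∑ j : Fin k, u * (v * Real.sin (ang k j ((l'.val:ℤ)+1)))
            = (u*v) * ∑ j : Fin k, Real.sin (ang k j ((l'.val:ℤ)+1)) := by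
          rw [Finset.mul_sum]; exact Finset.sum_congr rfl fun j _ => by ring
        rw [e, sinsum' hk]
        simp
    · -- inr inl
      cases b
      · have e : ∑ j : Fin k, (v * Real.cos (ang k j ((l.val:ℤ)+1))) * u
            = (u*v) * ∑ j : Fin k, Real.cos (ang k j ((l.val:ℤ)+1)) := by
          rw [Finset.mul_sum]; exact Finset.sum_congr rfl fun j _ => by ring
        rw [e, cossum' hk, if_neg (hd3 l)]
        simp
      · have e : ∑ j : Fin k, (v * Real.sin (ang k j ((l.val:ℤ)+1))) * u
            = (u*v) * ∑ j : Fin k, Real.sin (ang k j ((l.val:ℤ)+1)) := by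
          rw [Finset.mul_sum]; exact Finset.sum_congr rfl fun j _ => by ring
        rw [e, sinsum' hk]
        simp
    · -- inr inr
      cases b <;> cases b'
      · -- cos cos
        have e : ∑ j : Fin k, (v * Real.cos (ang k j ((l.val:ℤ)+1))) * (v * Real.cos (ang k j ((l'.val:ℤ)+1)))
            = v^2 * ∑ j : Fin k, Real.cos (ang k j ((l.val:ℤ)+1)) * Real.cos (ang k j ((l'.val:ℤ)+1)) := by
          rw [Finset.mul_sum]; exact Finset.sum_congr rfl fun j _ => by ring
        rw [e, mulcoscos' hk, if_neg (hd2 l l')]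
        by_cases hll : l = l'
        · subst hll
          rw [if_pos (by simp), if_pos rfl, hv]
          field_simp
          ring
        · rw [if_neg (hd1 l l' hll), if_neg (by simp [hll])]
          ring
      · -- cos sin
        have e : ∑ j : Fin k, (v * Real.cos (ang k j ((l.val:ℤ)+1))) * (v * Real.sin (ang k j ((l'.val:ℤ)+1)))
            = v^2 * ∑ j : Fin k, Real.cos (ang k j ((l.val:ℤ)+1)) * Real.sin (ang k j ((l'.val:ℤ)+1)) := by
          rw [Finset.mul_sum]; exact Finset.sum_congr rfl fun j _ => by ring
        rw [e, mulcossin' hk]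
        rw [if_neg (by simp)]
        ring
      · -- sin cos
        have e : ∑ j : Fin k, (v * Real.sin (ang k j ((l.val:ℤ)+1))) * (v * Real.cos (ang k j ((l'.val:ℤ)+1)))
            = v^2 * ∑ j : Fin k, Real.cos (ang k j ((l'.val:ℤ)+1)) * Real.sin (ang k j ((l.val:ℤ)+1)) := by
          rw [Finset.mul_sum]; exact Finset.sum_congr rfl fun j _ => by ring
        rw [e, mulcossin' hk]
        rw [if_neg (by simp)]
        ring
      · -- sin sin
        have e : ∑ j : Fin k, (v * Real.sin (ang k j ((l.val:ℤ)+1))) * (v * Real.sin (ang k j ((l'.val:ℤ)+1)))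
            = v^2 * ∑ j : Fin k, Real.sin (ang k j ((l.val:ℤ)+1)) * Real.sin (ang k j ((l'.val:ℤ)+1)) := by
          rw [Finset.mul_sum]; exact Finset.sum_congr rfl fun j _ => by ring
        rw [e, mulsinsin' hk, if_neg (hd2 l l')]
        by_cases hll : l = l'
        · subst hll
          rw [if_pos (by simp), if_pos rfl, hv]
          field_simp
          ring
        · rw [if_neg (hd1 l l' hll), if_neg (by simp [hll])]
          ring

lemma inner_eq_sum {n : ℕ} (x y : EuclideanSpace ℝ (Fin n)) :
    (inner ℝ x y : ℝ) = ∑ a, x a * y a := by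
  simp [PiLp.inner_apply, RCLike.inner_apply, mul_comm]

lemma transport {ι : Type} [Fintype ι] [DecidableEq ι] {n k : ℕ} (hcard : Fintype.card ι = n)
    (h : ∃ g₀ : Fin k → ι → ℝ, (∀ j, ∑ x, (g₀ j x)^2 = 1) ∧
      (∀ x y, ∑ j, g₀ j x * g₀ j y = if x = y then (k:ℝ)/n else 0)) :
    ∃ g : Fin k → EuclideanSpace ℝ (Fin n), (∀ j, ‖g j‖ = 1) ∧
      (∀ a b : Fin n, ∑ j, g j a * g j b = if a = b then (k:ℝ)/n else 0) := by
  obtain ⟨g₀, h1, h2⟩ := h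
  have e : ι ≃ Fin n := Fintype.equivOfCardEq (by simp [hcard])
  refine ⟨fun j => WithLp.toLp 2 (fun a => g₀ j (e.symm a)), ?_, ?_⟩
  · intro j
    rw [EuclideanSpace.norm_eq]
    have : ∑ a : Fin n, ‖g₀ j (e.symm a)‖^2 = 1 := by
      rw [← h1 j]
      exact Fintype.sum_equiv e.symm _ _ (fun a => by rw [Real.norm_eq_abs, _root_.sq_abs])
    rw [this, Real.sqrt_one]
  · intro a b
    rw [h2 (e.symm a) (e.symm b)]
    simp

lemma exists_tight {n k : ℕ} (hn : 0 < n) (hk : n ≤ k) :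
    ∃ g : Fin k → EuclideanSpace ℝ (Fin n), (∀ j, ‖g j‖ = 1) ∧
      (∀ a b : Fin n, ∑ j, g j a * g j b = if a = b then (k:ℝ)/n else 0) := by
  rcases eq_or_lt_of_le hk with heq | hlt
  · -- k = n : orthonormal basis
    refine transport (ι := Fin k) (by simp [heq]) ?_
    refine ⟨fun j x => if j = x then 1 else 0, ?_, ?_⟩
    · intro j
      have : ∀ x : Fin k, (if j = x then (1:ℝ) else 0)^2 = if j = x then 1 else 0 := by
        intro x; split <;> norm_num
      simp [this]
    · intro x y
      have hkn : (k:ℝ)/n = 1 := by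
        rw [← heq]; field_simp
      by_cases hxy : x = y
      · subst hxy
        rw [if_pos rfl, hkn]
        have : ∀ j : Fin k, (if j = x then (1:ℝ) else 0) * (if j = x then 1 else 0)
            = if j = x then 1 else 0 := by intro j; split <;> norm_num
        simp [this]
      · rw [if_neg hxy]
        refine Finset.sum_eq_zero fun j _ => ?_
        dsimp only
        by_cases hjx : j = x
        · subst hjx; simp [hxy]
        · simp [hjx]
  · -- k > n : harmonic frame
    refine transport (ι := Fin (n % 2) ⊕ Fin (n / 2) × Bool) ?_
      (harmonicFrame (k := k) (n := n) (m := n / 2) (r := n % 2) (by omega) (by omega) hn hlt)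
    simp
    omega

open scoped RealInnerProductSpace

noncomputable def SM {n k : ℕ} (f : Fin k → EuclideanSpace ℝ (Fin n)) (a b : Fin n) : ℝ :=
  ∑ i, f i a * f i b

lemma gram_eq {n k : ℕ} (f : Fin k → EuclideanSpace ℝ (Fin n)) :
    ∑ i, ∑ j, (⟪f i, f j⟫ : ℝ)^2 = ∑ a, ∑ b, SM f a b ^ 2 := by
  have step1 : ∀ i j : Fin k, (⟪f i, f j⟫ : ℝ)^2
      = ∑ a, ∑ b, (f i a * f j a) * (f i b * f j b) := by
    intro i j
    rw [sq, inner_eq_sum, Finset.sum_mul_sum]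
  have step2 : ∀ a b : Fin n, SM f a b ^ 2
      = ∑ i, ∑ j, (f i a * f i b) * (f j a * f j b) := by
    intro a b
    rw [sq, SM, Finset.sum_mul_sum]
  simp only [step1, step2]
  calc ∑ i, ∑ j, ∑ a, ∑ b, (f i a * f j a) * (f i b * f j b)
      = ∑ i, ∑ a, ∑ j, ∑ b, (f i a * f j a) * (f i b * f j b) :=
        Finset.sum_congr rfl fun i _ => Finset.sum_comm
    _ = ∑ a, ∑ i, ∑ j, ∑ b, (f i a * f j a) * (f i b * f j b) := Finset.sum_comm
    _ = ∑ a, ∑ i, ∑ b, ∑ j, (f i a * f j a) * (f i b * f j b) :=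
        Finset.sum_congr rfl fun a _ => Finset.sum_congr rfl fun i _ => Finset.sum_comm
    _ = ∑ a, ∑ b, ∑ i, ∑ j, (f i a * f j a) * (f i b * f j b) :=
        Finset.sum_congr rfl fun a _ => Finset.sum_comm
    _ = ∑ a, ∑ b, ∑ i, ∑ j, (f i a * f i b) * (f j a * f j b) :=
        Finset.sum_congr rfl fun a _ => Finset.sum_congr rfl fun b _ =>
          Finset.sum_congr rfl fun i _ => Finset.sum_congr rfl fun j _ => by ring

lemma trace_eq {n k : ℕ} (f : Fin k → EuclideanSpace ℝ (Fin n)) (hf : ∀ i, ‖f i‖ = 1) :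
    ∑ a, SM f a a = (k:ℝ) := by
  unfold SM
  rw [Finset.sum_comm]
  have : ∀ i : Fin k, ∑ a, f i a * f i a = 1 := by
    intro i
    have h1 : (⟪f i, f i⟫ : ℝ) = ∑ a, f i a * f i a := inner_eq_sum _ _
    have h2 : (⟪f i, f i⟫ : ℝ) = ‖f i‖^2 := real_inner_self_eq_norm_sq _
    rw [← h1, h2, hf i]
    norm_num
  simp [this]

lemma two_fp2 {n k : ℕ} (f : Fin k → EuclideanSpace ℝ (Fin n)) (hf : ∀ i, ‖f i‖ = 1) :
    2 * framePotential2 f = (∑ a, ∑ b, SM f a b ^ 2) - k := by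
  have habs : framePotential2 f
      = ∑ q ∈ Finset.filter (fun q : Fin k × Fin k => q.1 < q.2) Finset.univ,
          (⟪f q.1, f q.2⟫ : ℝ)^2 := by
    unfold framePotential2
    exact Finset.sum_congr rfl fun q _ => _root_.sq_abs _
  have htot : ∑ a, ∑ b, SM f a b ^ 2
      = ∑ q : Fin k × Fin k, (⟪f q.1, f q.2⟫ : ℝ)^2 := by
    rw [← gram_eq, ← Fintype.sum_prod_type']
  -- split the total sum
  have hsplit : ∑ q : Fin k × Fin k, (⟪f q.1, f q.2⟫ : ℝ)^2
      = (∑ q ∈ Finset.filter (fun q : Fin k × Fin k => q.1 = q.2) Finset.univ,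
          (⟪f q.1, f q.2⟫ : ℝ)^2)
        + ((∑ q ∈ Finset.filter (fun q : Fin k × Fin k => q.1 < q.2) Finset.univ,
          (⟪f q.1, f q.2⟫ : ℝ)^2)
        + (∑ q ∈ Finset.filter (fun q : Fin k × Fin k => q.2 < q.1) Finset.univ,
          (⟪f q.1, f q.2⟫ : ℝ)^2)) := by
    rw [← Finset.sum_filter_add_sum_filter_not Finset.univ
      (fun q : Fin k × Fin k => q.1 = q.2)]
    congr 1
    rw [← Finset.sum_filter_add_sum_filter_not
      (Finset.filter (fun q : Fin k × Fin k => ¬ q.1 = q.2) Finset.univ)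
      (fun q : Fin k × Fin k => q.1 < q.2)]
    congr 1
    · apply Finset.sum_congr _ (fun q _ => rfl)
      rw [Finset.filter_filter]
      apply Finset.filter_congr
      intro q _
      simp only [Fin.ext_iff, Fin.lt_def]
      constructor
      · exact fun h => h.2
      · intro h; omega
    · apply Finset.sum_congr _ (fun q _ => rfl)
      rw [Finset.filter_filter]
      apply Finset.filter_congr
      intro q _
      simp only [Fin.ext_iff, Fin.lt_def, not_lt]
      constructor
      · intro h; omega
      · intro h; omega
  have hdiag : ∑ q ∈ Finset.filter (fun q : Fin k × Fin k => q.1 = q.2) Finset.univ,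
      (⟪f q.1, f q.2⟫ : ℝ)^2 = (k:ℝ) := by
    rw [Finset.sum_filter]
    rw [show (∑ q : Fin k × Fin k, if q.1 = q.2 then (⟪f q.1, f q.2⟫ : ℝ)^2 else 0)
        = ∑ i : Fin k, ∑ j : Fin k, if i = j then (⟪f i, f j⟫ : ℝ)^2 else 0
      from Fintype.sum_prod_type' (f := fun i j => if i = j then (⟪f i, f j⟫ : ℝ)^2 else 0)]
    have key : ∀ i : Fin k, ∑ j, (if i = j then (⟪f i, f j⟫ : ℝ)^2 else 0) = 1 := by
      intro i
      rw [Finset.sum_ite_eq, if_pos (Finset.mem_univ i), real_inner_self_eq_norm_sq, hf i]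
      norm_num
    rw [Finset.sum_congr rfl fun i _ => key i]
    simp
  have hswap : ∑ q ∈ Finset.filter (fun q : Fin k × Fin k => q.2 < q.1) Finset.univ,
      (⟪f q.1, f q.2⟫ : ℝ)^2
      = ∑ q ∈ Finset.filter (fun q : Fin k × Fin k => q.1 < q.2) Finset.univ,
      (⟪f q.1, f q.2⟫ : ℝ)^2 := by
    refine Finset.sum_bij' (fun q _ => Prod.swap q) (fun q _ => Prod.swap q) ?_ ?_ ?_ ?_ ?_
    · intro q hq; simp at hq ⊢; exact hq
    · intro q hq; simp at hq ⊢; exact hq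
    · intro q _; simp
    · intro q _; simp
    · intro q _
      simp only [Prod.fst_swap, Prod.snd_swap]
      rw [real_inner_comm]
  rw [habs, htot, hsplit, hdiag, hswap]
  ring

lemma Edecomp {n k : ℕ} (hn : 0 < n) (f : Fin k → EuclideanSpace ℝ (Fin n))
    (hf : ∀ i, ‖f i‖ = 1) :
    ∑ a, ∑ b, (SM f a b - if a = b then (k:ℝ)/n else 0)^2
      = (∑ a, ∑ b, SM f a b ^ 2) - (k:ℝ)^2/n := by
  have hnne : (n:ℝ) ≠ 0 := Nat.cast_ne_zero.2 hn.ne'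
  set c : ℝ := (k:ℝ)/n with hc
  have hrow : ∀ a : Fin n, ∑ b, (SM f a b - if a = b then c else 0)^2
      = (∑ b, SM f a b ^ 2) - (2*c*SM f a a - c^2) := by
    intro a
    have e1 : ∀ b : Fin n, (SM f a b - if a = b then c else 0)^2
        = SM f a b ^ 2 - (if a = b then 2*c*SM f a b - c^2 else 0) := by
      intro b
      by_cases h : a = b <;> simp [h] <;> ring
    rw [Finset.sum_congr rfl fun b _ => e1 b, Finset.sum_sub_distrib,
      Finset.sum_ite_eq, if_pos (Finset.mem_univ a)]
  rw [Finset.sum_congr rfl fun a _ => hrow a, Finset.sum_sub_distrib,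
    Finset.sum_sub_distrib]
  rw [Finset.sum_const, Finset.card_univ, Fintype.card_fin, ← Finset.mul_sum,
    trace_eq f hf, hc, nsmul_eq_mul]
  field_simp
  ring

lemma tight_iff {n k : ℕ} (f : Fin k → EuclideanSpace ℝ (Fin n)) :
    (∀ x : EuclideanSpace ℝ (Fin n),
        ∑ i, (⟪x, f i⟫ : ℝ) ^ 2 = ((k : ℝ) / n) * ‖x‖ ^ 2) ↔
      (∀ a b : Fin n, SM f a b = if a = b then (k:ℝ)/n else 0) := by
  constructor
  · intro h
    have hdiag : ∀ a : Fin n, SM f a a = (k:ℝ)/n := by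
      intro a
      have hx := h (EuclideanSpace.single a (1:ℝ))
      rw [EuclideanSpace.norm_single] at hx
      simp only [norm_one, one_pow, mul_one] at hx
      rw [← hx]
      unfold SM
      refine Finset.sum_congr rfl fun i _ => ?_
      rw [EuclideanSpace.inner_single_left]
      simp [sq]
    intro a b
    by_cases hab : a = b
    · subst hab; rw [if_pos rfl]; exact hdiag a
    · rw [if_neg hab]
      have hx := h (EuclideanSpace.single a (1:ℝ) + EuclideanSpace.single b (1:ℝ))
      have hnorm : ‖EuclideanSpace.single a (1:ℝ) + EuclideanSpace.single b (1:ℝ)‖^2 = 2 := by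
        rw [← real_inner_self_eq_norm_sq]
        rw [inner_add_left, inner_add_right, inner_add_right]
        rw [EuclideanSpace.inner_single_left, EuclideanSpace.inner_single_left,
          EuclideanSpace.inner_single_left, EuclideanSpace.inner_single_left]
        simp [EuclideanSpace.single_apply, hab, Ne.symm hab]
        norm_num
      have hexp : ∀ i : Fin k,
          (⟪EuclideanSpace.single a (1:ℝ) + EuclideanSpace.single b (1:ℝ), f i⟫ : ℝ)^2
            = (f i a)^2 + 2*(f i a * f i b) + (f i b)^2 := by
        intro i
        rw [inner_add_left, EuclideanSpace.inner_single_left, EuclideanSpace.inner_single_left]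
        simp
        ring
      rw [hnorm, Finset.sum_congr rfl fun i _ => hexp i] at hx
      rw [Finset.sum_add_distrib, Finset.sum_add_distrib, ← Finset.mul_sum] at hx
      have h1 : ∑ i, (f i a)^2 = (k:ℝ)/n := by
        rw [← hdiag a]; unfold SM; exact Finset.sum_congr rfl fun i _ => pow_two _
      have h2 : ∑ i, (f i b)^2 = (k:ℝ)/n := by
        rw [← hdiag b]; unfold SM; exact Finset.sum_congr rfl fun i _ => pow_two _
      have : SM f a b = ∑ i, f i a * f i b := rfl
      rw [this]
      rw [h1, h2] at hx
      linarith
  · intro h x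
    have hx2 : ‖x‖^2 = ∑ a, x a * x a := by
      rw [← real_inner_self_eq_norm_sq, inner_eq_sum]
    have step : ∀ i : Fin k, (⟪x, f i⟫ : ℝ)^2 = ∑ a, ∑ b, (x a * f i a) * (x b * f i b) := by
      intro i
      rw [sq, inner_eq_sum, Finset.sum_mul_sum]
    rw [Finset.sum_congr rfl fun i _ => step i]
    calc ∑ i, ∑ a, ∑ b, (x a * f i a) * (x b * f i b)
        = ∑ a, ∑ i, ∑ b, (x a * f i a) * (x b * f i b) := Finset.sum_comm
      _ = ∑ a, ∑ b, ∑ i, (x a * f i a) * (x b * f i b) :=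
          Finset.sum_congr rfl fun a _ => Finset.sum_comm
      _ = ∑ a, ∑ b, (x a * x b) * SM f a b := by
          refine Finset.sum_congr rfl fun a _ => Finset.sum_congr rfl fun b _ => ?_
          rw [SM, Finset.mul_sum]
          exact Finset.sum_congr rfl fun i _ => by ring
      _ = ∑ a, (x a * x a) * ((k:ℝ)/n) := by
          refine Finset.sum_congr rfl fun a _ => ?_
          rw [Finset.sum_congr rfl fun b _ => by rw [h a b, mul_ite, mul_zero]]
          rw [Finset.sum_ite_eq, if_pos (Finset.mem_univ a)]
      _ = ((k:ℝ)/n) * ‖x‖^2 := by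
          rw [hx2, Finset.mul_sum]
          exact Finset.sum_congr rfl fun a _ => by ring

/-- Among unit-norm families of `k ≥ n` vectors in `ℝ^n`, the 2-frame potential
is minimized exactly at tight frames, i.e. those with
`∑ᵢ ⟨x, fᵢ⟩² = (k/n)‖x‖²` for all `x`. -/
theorem framePotential2_min_iff_tight {n k : ℕ} (hn : 0 < n) (hk : n ≤ k)
    (f : Fin k → EuclideanSpace ℝ (Fin n)) (hf : ∀ i, ‖f i‖ = 1) :
    (∀ g : Fin k → EuclideanSpace ℝ (Fin n), (∀ i, ‖g i‖ = 1) →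
        framePotential2 f ≤ framePotential2 g) ↔
      ∀ x : EuclideanSpace ℝ (Fin n),
        ∑ i, ⟪x, f i⟫ ^ 2 = ((k : ℝ) / n) * ‖x‖ ^ 2 := by
  have lower : ∀ g : Fin k → EuclideanSpace ℝ (Fin n), (∀ i, ‖g i‖ = 1) →
      (k:ℝ)^2/n - k ≤ 2 * framePotential2 g := by
    intro g hg
    rw [two_fp2 g hg]
    have h := Edecomp hn g hg
    have hE : 0 ≤ ∑ a, ∑ b, (SM g a b - if a = b then (k:ℝ)/n else 0)^2 :=
      Finset.sum_nonneg fun a _ => Finset.sum_nonneg fun b _ => sq_nonneg _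
    linarith
  have tight_val : ∀ g : Fin k → EuclideanSpace ℝ (Fin n), (∀ i, ‖g i‖ = 1) →
      (∀ a b, SM g a b = if a = b then (k:ℝ)/n else 0) →
      2 * framePotential2 g = (k:ℝ)^2/n - k := by
    intro g hg hS
    rw [two_fp2 g hg]
    have h := Edecomp hn g hg
    have hz : ∑ a, ∑ b, (SM g a b - if a = b then (k:ℝ)/n else 0)^2 = 0 :=
      Finset.sum_eq_zero fun a _ => Finset.sum_eq_zero fun b _ => by rw [hS a b]; ring
    linarith
  constructor
  · intro hmin
    obtain ⟨g₀, hg₀, hS₀⟩ := exists_tight hn hk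
    have hSg₀ : ∀ a b, SM g₀ a b = if a = b then (k:ℝ)/n else 0 := fun a b => hS₀ a b
    have h1 : 2 * framePotential2 f ≤ (k:ℝ)^2/n - k := by
      have ha := hmin g₀ hg₀
      have hb := tight_val g₀ hg₀ hSg₀
      linarith
    have h2 := two_fp2 f hf
    have h3 := Edecomp hn f hf
    have hE0 : ∑ a, ∑ b, (SM f a b - if a = b then (k:ℝ)/n else 0)^2 = 0 := by
      have hE : 0 ≤ ∑ a, ∑ b, (SM f a b - if a = b then (k:ℝ)/n else 0)^2 :=
        Finset.sum_nonneg fun a _ => Finset.sum_nonneg fun b _ => sq_nonneg _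
      linarith
    have hS : ∀ a b, SM f a b = if a = b then (k:ℝ)/n else 0 := by
      intro a b
      have h4 := (Finset.sum_eq_zero_iff_of_nonneg
        (fun a _ => Finset.sum_nonneg fun b _ => sq_nonneg
          (SM f a b - if a = b then (k:ℝ)/n else 0))).1 hE0 a (Finset.mem_univ a)
      have h5 := (Finset.sum_eq_zero_iff_of_nonneg
        (fun b _ => sq_nonneg (SM f a b - if a = b then (k:ℝ)/n else 0))).1 h4 b
        (Finset.mem_univ b)
      have h6 : SM f a b - (if a = b then (k:ℝ)/n else 0) = 0 := by
        have := sq_eq_zero_iff.1 h5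
        exact this
      linarith [h6]
    exact (tight_iff f).2 hS
  · intro htight g hg
    have hS := (tight_iff f).1 htight
    have ha := tight_val f hf hS
    have hb := lower g hg
    linarith
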